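/- For any propositions φ, ψ, E, minimal logic proves ((¬(φ ∨ ψ)) → E) → ((((¬φ → E) ∨ (¬ψ → E)) → E) → E), where ¬θ := θ → False. -/
import Mathlib

theorem stmt4 (φ ψ E : Prop) :
    (((φ ∨ ψ) → False) → E) →
      (((((φ → False) → E) ∨ ((ψ → False) → E)) → E) → E) := by
  exact fun h k => k (Or.inl fun nφ => k (Or.inr fun nψ => h fun d => d.elim nφ nψ))
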